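/- For ω > 0, the 4×4 determinant det [[e^{i√ω t}, i√ω e^{i√ω t}, 1, i√ω], [e^{−i√ω t}, −i√ω e^{−i√ω t}, 1, −i√ω], [1, 0, 1, 0], [t, 1, 0, 1]] equals a nonzero constant multiple of sin(√ω t/2)·(√ω t cos(√ω t/2) − 2 sin(√ω t/2)). -/

import Mathlib

open Complex

/-- The 4×4 determinant arising from the constant-curvature model Jacobi curve equals a
nonzero constant multiple of `sin(√ω t/2)(√ω t cos(√ω t/2) − 2 sin(√ω t/2))`. -/
theorem model_determinant_eq
    (ω : ℝ) (hω : 0 < ω) :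
    ∃ c : ℂ, c ≠ 0 ∧ ∀ t : ℝ,
      Matrix.det
        !![Complex.exp (I * Real.sqrt ω * t),
            I * Real.sqrt ω * Complex.exp (I * Real.sqrt ω * t), 1, I * Real.sqrt ω;
          Complex.exp (-(I * Real.sqrt ω * t)),
            -(I * Real.sqrt ω) * Complex.exp (-(I * Real.sqrt ω * t)), 1,
            -(I * Real.sqrt ω);
          1, 0, 1, 0;
          (t : ℂ), 1, 0, 1]
        = c * ((Real.sin (Real.sqrt ω * t / 2) *
            (Real.sqrt ω * t * Real.cos (Real.sqrt ω * t / 2)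
              - 2 * Real.sin (Real.sqrt ω * t / 2)) : ℝ) : ℂ) := by
  set s : ℝ := Real.sqrt ω with hs
  have hs0 : (0 : ℝ) < s := Real.sqrt_pos.mpr hω
  refine ⟨4 * I * (s : ℂ), ?_, ?_⟩
  · simp [I_ne_zero, ne_of_gt hs0]
  intro t
  have h1 : I * (s : ℂ) * (t : ℂ) = ((s * t : ℝ) : ℂ) * I := by push_cast; ring
  have h2 : Complex.exp (I * (s : ℂ) * (t : ℂ))
      = Complex.cos ((s * t : ℝ) : ℂ) + Complex.sin ((s * t : ℝ) : ℂ) * I := by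
    rw [h1, Complex.exp_mul_I]
  have h3 : Complex.exp (-(I * (s : ℂ) * (t : ℂ)))
      = Complex.cos ((s * t : ℝ) : ℂ) - Complex.sin ((s * t : ℝ) : ℂ) * I := by
    rw [h1, ← neg_mul, Complex.exp_mul_I, Complex.cos_neg, Complex.sin_neg]
    ring
  have hst : ((s * t : ℝ) : ℂ) = 2 * ((s * t / 2 : ℝ) : ℂ) := by push_cast; ring
  have hcos : Complex.cos ((s * t : ℝ) : ℂ)
      = Complex.cos ((s * t / 2 : ℝ) : ℂ) ^ 2 - Complex.sin ((s * t / 2 : ℝ) : ℂ) ^ 2 := by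
    rw [hst, Complex.cos_two_mul']
  have hsin : Complex.sin ((s * t : ℝ) : ℂ)
      = 2 * Complex.sin ((s * t / 2 : ℝ) : ℂ) * Complex.cos ((s * t / 2 : ℝ) : ℂ) := by
    rw [hst, Complex.sin_two_mul]
  have hpyth := Complex.sin_sq_add_cos_sq ((s * t / 2 : ℝ) : ℂ)
  rw [Matrix.det_succ_row_zero]
  simp [Fin.sum_univ_succ, Matrix.det_fin_three, Fin.succAbove,
    show ((Fin.castSucc 2 : Fin 4)) = 2 from rfl, show ((Fin.succ 2 : Fin 4)) = 3 from rfl]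
  rw [h2, h3, hcos, hsin]
  push_cast [Complex.ofReal_sin, Complex.ofReal_cos] at hpyth ⊢
  have hI : (I : ℂ) ^ 2 = -1 := Complex.I_sq
  set C : ℂ := Complex.cos ((s : ℂ) * (t : ℂ) / 2)
  set S : ℂ := Complex.sin ((s : ℂ) * (t : ℂ) / 2)
  linear_combination (I * (s : ℂ) * (2 - 2 * S ^ 2 - 2 * C ^ 2)) * hpyth
    + (I * (s : ℂ) * (8 * C ^ 2 * S ^ 2 - 4 * C * S * (s : ℂ) * (t : ℂ))) * hI
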